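/- Third-frame JD distortion at high first-frame rate and vanishing R₂: for 0 < ρ < 1, with the reconstruction X̂₃ = −(ρ²/√(1+ρ²))X̂₁ + ρX̂₂ + (1/√(1+ρ²))X₃ built from X̂₁ = X₁ and X̂₂ = ρX₁ + Z₂ where Z₂ ~ N(0,(1−ρ²)σ²) is independent of (X₁,N₁,N₂), the distortion satisfies E[(X₃−X̂₃)²] = 2σ²(1−ρ⁴)(1 − 1/√(1+ρ²)). -/

import Mathlib

open MeasureTheory ProbabilityTheory Real
open scoped NNReal ENNReal

lemma gauss_sq_integral {b : ℝ} (hb : 0 < b) :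
    ∫ x : ℝ, x ^ 2 * Real.exp (-b * x ^ 2) = (1 / (2 * b)) * Real.sqrt (π / b) := by
  have hu : ∀ x : ℝ, HasDerivAt (fun x : ℝ => x) 1 x := fun x => hasDerivAt_id x
  have hv : ∀ x : ℝ, HasDerivAt (fun x : ℝ => -Real.exp (-b * x ^ 2) / (2 * b))
      (x * Real.exp (-b * x ^ 2)) x := by
    intro x
    have h1 : HasDerivAt (fun x : ℝ => -b * x ^ 2) (-b * (2 * x ^ 1)) x :=
      (hasDerivAt_pow 2 x).const_mul (-b)
    have h2 := (h1.exp).neg.div_const (2 * b)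
    refine h2.congr_deriv ?_
    rw [div_eq_iff (mul_pos two_pos hb).ne']
    ring
  have hev : Integrable (fun x : ℝ => Real.exp (-b * x ^ 2)) := integrable_exp_neg_mul_sq hb
  have hx2 : Integrable (fun x : ℝ => x ^ 2 * Real.exp (-b * x ^ 2)) := by
    have h := integrable_rpow_mul_exp_neg_mul_sq hb (show (-1 : ℝ) < 2 by norm_num)
    have hx : ∀ x : ℝ, x ^ (2:ℝ) = x ^ 2 := fun x => by
      rw [show (2:ℝ) = ((2:ℕ):ℝ) by norm_num, Real.rpow_natCast]
    exact h.congr (Filter.Eventually.of_forall fun x => by simp only [hx])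
  have hxv : Integrable (fun x : ℝ => x * Real.exp (-b * x ^ 2)) := integrable_mul_exp_neg_mul_sq hb
  have key := MeasureTheory.integral_mul_deriv_eq_deriv_mul_of_integrable (fun x _ => hu x) (fun x _ => hv x)
    (by simpa [Pi.mul_def, mul_assoc, pow_two] using hx2)
    (by
      have : Integrable (fun x : ℝ => -Real.exp (-b * x ^ 2) / (2 * b)) :=
        (hev.neg).div_const _
      simpa [Pi.mul_def] using this)
    (by
      have : Integrable (fun x : ℝ => x * (-Real.exp (-b * x ^ 2) / (2 * b))) := by
        have := (hxv.neg).div_const (2 * b)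
        exact this.congr (Filter.Eventually.of_forall fun x => by simp; ring)
      simpa [Pi.mul_def] using this)
  have hL : (∫ x : ℝ, x * (x * Real.exp (-b * x ^ 2)))
      = ∫ x : ℝ, x ^ 2 * Real.exp (-b * x ^ 2) := by
    congr 1; funext x; ring
  rw [hL] at key
  rw [key]
  have hfun : (fun x : ℝ => (1:ℝ) * (-Real.exp (-b * x ^ 2) / (2 * b)))
      = fun x : ℝ => (-(1 / (2 * b))) * Real.exp (-b * x ^ 2) := funext fun x => by ring
  rw [hfun, integral_const_mul, integral_gaussian]
  ring

lemma integral_gaussianReal_eq {v : ℝ≥0} (hv : v ≠ 0) (g : ℝ → ℝ) :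
    ∫ x, g x ∂(gaussianReal 0 v) = ∫ x, gaussianPDFReal 0 v x * g x := by
  rw [gaussianReal_of_var_ne_zero 0 hv]
  have hmeas : Measurable fun x => (gaussianPDFReal 0 v x).toNNReal :=
    (measurable_gaussianPDFReal 0 v).real_toNNReal
  have hpdf : gaussianPDF 0 v = fun x => ((gaussianPDFReal 0 v x).toNNReal : ℝ≥0∞) := rfl
  rw [hpdf, integral_withDensity_eq_integral_smul hmeas]
  congr 1; funext x
  rw [NNReal.smul_def, Real.coe_toNNReal _ (gaussianPDFReal_nonneg 0 v x), smul_eq_mul]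

lemma integrable_gaussianReal_iff {v : ℝ≥0} (hv : v ≠ 0) (g : ℝ → ℝ) :
    Integrable g (gaussianReal 0 v) ↔
      Integrable (fun x => gaussianPDFReal 0 v x * g x) := by
  rw [gaussianReal_of_var_ne_zero 0 hv]
  have hmeas : Measurable fun x => (gaussianPDFReal 0 v x).toNNReal :=
    (measurable_gaussianPDFReal 0 v).real_toNNReal
  have hpdf : gaussianPDF 0 v = fun x => ((gaussianPDFReal 0 v x).toNNReal : ℝ≥0∞) := rfl
  rw [hpdf, integrable_withDensity_iff_integrable_smul hmeas]
  constructor <;> intro h <;>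
    refine h.congr (Filter.Eventually.of_forall fun x => ?_) <;>
    simp only [NNReal.smul_def, Real.coe_toNNReal _ (gaussianPDFReal_nonneg 0 v x), smul_eq_mul]

lemma pdf_sq_eq {v : ℝ≥0} (hv : v ≠ 0) (x : ℝ) :
    gaussianPDFReal 0 v x * x ^ 2
      = (Real.sqrt (2 * π * v))⁻¹ * (x ^ 2 * Real.exp (-(2 * (v:ℝ))⁻¹ * x ^ 2)) := by
  have hvpos : (0:ℝ) < v := by positivity
  rw [gaussianPDFReal]
  have harg : -(x - 0) ^ 2 / (2 * (v:ℝ)) = -(2 * (v:ℝ))⁻¹ * x ^ 2 := by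
    field_simp
    ring
  rw [harg]; ring

lemma integrable_sq_gaussianReal {v : ℝ≥0} (hv : v ≠ 0) :
    Integrable (fun x : ℝ => x ^ 2) (gaussianReal 0 v) := by
  have hvpos : (0:ℝ) < v := lt_of_le_of_ne v.coe_nonneg (by exact_mod_cast (Ne.symm hv))
  have hb : (0:ℝ) < (2 * (v:ℝ))⁻¹ := by positivity
  rw [integrable_gaussianReal_iff hv]
  have h := integrable_rpow_mul_exp_neg_mul_sq hb (show (-1:ℝ) < 2 by norm_num)
  have h2 : Integrable (fun x : ℝ => x ^ 2 * Real.exp (-(2 * (v:ℝ))⁻¹ * x ^ 2)) := by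
    have hx : ∀ x : ℝ, x ^ (2:ℝ) = x ^ 2 := fun x => by
      rw [show (2:ℝ) = ((2:ℕ):ℝ) by norm_num, Real.rpow_natCast]
    exact h.congr (Filter.Eventually.of_forall fun x => by simp only [hx])
  exact (h2.const_mul _).congr
    (Filter.Eventually.of_forall fun x => (pdf_sq_eq hv x).symm)

lemma integral_sq_gaussianReal {v : ℝ≥0} (hv : v ≠ 0) :
    ∫ x, x ^ 2 ∂(gaussianReal 0 v) = v := by
  have hvpos : (0:ℝ) < v := lt_of_le_of_ne v.coe_nonneg (by exact_mod_cast (Ne.symm hv))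
  have hb : (0:ℝ) < (2 * (v:ℝ))⁻¹ := by positivity
  rw [integral_gaussianReal_eq hv]
  have hrw : (fun x : ℝ => gaussianPDFReal 0 v x * x ^ 2)
      = fun x : ℝ => (Real.sqrt (2 * π * v))⁻¹
          * (x ^ 2 * Real.exp (-(2 * (v:ℝ))⁻¹ * x ^ 2)) := funext fun x => pdf_sq_eq hv x
  rw [hrw, integral_const_mul, gauss_sq_integral hb]
  have h1 : 1 / (2 * (2 * (v:ℝ))⁻¹) = (v:ℝ) := by field_simp
  have h2 : π / (2 * (v:ℝ))⁻¹ = 2 * π * v := by field_simp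
  rw [h1, h2]
  have hs : Real.sqrt (2 * π * v) ≠ 0 := by
    refine ne_of_gt (Real.sqrt_pos.2 ?_)
    have := Real.pi_pos; positivity
  field_simp

lemma integral_id_gaussianReal (v : ℝ≥0) : ∫ x, x ∂(gaussianReal 0 v) = 0 := by
  have h := gaussianReal_map_const_mul (μ := 0) (v := v) (-1)
  have hone : (.mk ((-1:ℝ) ^ 2) (sq_nonneg _) : ℝ≥0) = 1 := by ext; norm_num
  rw [hone, one_mul, mul_zero] at h
  have h2 : ∫ x, x ∂(gaussianReal 0 v)
      = ∫ x, (-1 : ℝ) * x ∂(gaussianReal 0 v) := by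
    conv_lhs => rw [← h]
    exact integral_map (by fun_prop) aestronglyMeasurable_id
  rw [integral_const_mul] at h2
  linarith

lemma rv_facts {Ω : Type*} [MeasurableSpace Ω] (μ : Measure Ω) [IsProbabilityMeasure μ]
    {V : Ω → ℝ} {v : ℝ≥0} (hv : v ≠ 0) (hmap : μ.map V = gaussianReal 0 v) :
    AEMeasurable V μ ∧ Integrable V μ ∧ Integrable (fun ω => V ω ^ 2) μ
      ∧ (∫ ω, V ω ∂μ) = 0 ∧ (∫ ω, V ω ^ 2 ∂μ) = v := by
  have hae : AEMeasurable V μ := by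
    by_contra h
    rw [Measure.map_of_not_aemeasurable h] at hmap
    have := congrArg (fun m : Measure ℝ => m Set.univ) hmap
    simp at this
  have hInt2 : Integrable (fun ω => V ω ^ 2) μ := by
    have h0 : Integrable (fun x : ℝ => x ^ 2) (μ.map V) := by
      rw [hmap]; exact integrable_sq_gaussianReal hv
    exact (integrable_map_measure (by fun_prop) hae).1 h0
  have hMem : MemLp V 2 μ :=
    (memLp_two_iff_integrable_sq hae.aestronglyMeasurable).2 hInt2
  have hInt1 : Integrable V μ := hMem.integrable one_le_two
  have hmean : (∫ ω, V ω ∂μ) = 0 := by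
    have h := integral_map (f := fun x : ℝ => x) hae aestronglyMeasurable_id
    rw [hmap, _root_.integral_id_gaussianReal] at h
    exact h.symm
  have hm2 : (∫ ω, V ω ^ 2 ∂μ) = v := by
    have h := integral_map (f := fun x : ℝ => x ^ 2) hae (by fun_prop)
    rw [hmap, integral_sq_gaussianReal hv] at h
    exact h.symm
  exact ⟨hae, hInt1, hInt2, hmean, hm2⟩


/-- Third-frame JD distortion at high first-frame rate and vanishing `R₂`: in the Gauss-Markov
model `X₃ = ρ²X₁ + ρN₁ + N₂` with `X₁ ~ N(0,σ2)`, `N₁,N₂,Z₂ ~ N(0,(1−ρ²)σ2)` all independent,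
with `X̂₁ = X₁`, `X̂₂ = ρX₁ + Z₂`, and
`X̂₃ = −(ρ²/√(1+ρ²))X̂₁ + ρX̂₂ + (1/√(1+ρ²))X₃`, the distortion satisfies
`E[(X₃−X̂₃)²] = 2σ2(1−ρ⁴)(1 − 1/√(1+ρ²))`. -/
theorem stmt18 {Ω : Type*} [MeasurableSpace Ω] (μ : Measure Ω) [IsProbabilityMeasure μ]
    (ρ σ2 : ℝ) (hρ0 : 0 < ρ) (hρ1 : ρ < 1) (hσ : 0 < σ2)
    (X₁ N₁ N₂ Z₂ : Ω → ℝ)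
    (hindep : iIndepFun ![X₁, N₁, N₂, Z₂] μ)
    (hX₁ : μ.map X₁ = gaussianReal 0 σ2.toNNReal)
    (hN₁ : μ.map N₁ = gaussianReal 0 ((1 - ρ ^ 2) * σ2).toNNReal)
    (hN₂ : μ.map N₂ = gaussianReal 0 ((1 - ρ ^ 2) * σ2).toNNReal)
    (hZ₂ : μ.map Z₂ = gaussianReal 0 ((1 - ρ ^ 2) * σ2).toNNReal) :
    ∫ ω, ((ρ ^ 2 * X₁ ω + ρ * N₁ ω + N₂ ω)
        - (-(ρ ^ 2 / Real.sqrt (1 + ρ ^ 2)) * X₁ ω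
           + ρ * (ρ * X₁ ω + Z₂ ω)
           + (1 / Real.sqrt (1 + ρ ^ 2)) * (ρ ^ 2 * X₁ ω + ρ * N₁ ω + N₂ ω))) ^ 2 ∂μ
      = 2 * σ2 * (1 - ρ ^ 4) * (1 - 1 / Real.sqrt (1 + ρ ^ 2)) := by
  -- variance value
  have hwpos : (0:ℝ) < (1 - ρ ^ 2) * σ2 := mul_pos (by nlinarith) hσ
  have hwne : ((1 - ρ ^ 2) * σ2).toNNReal ≠ 0 := by
    simp [Real.toNNReal_eq_zero, not_le, hwpos]
  have hcoe : ((((1 - ρ ^ 2) * σ2).toNNReal : ℝ≥0) : ℝ) = (1 - ρ ^ 2) * σ2 :=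
    Real.coe_toNNReal _ hwpos.le
  obtain ⟨hae1, hI1, hS1, hE1, hV1⟩ := rv_facts μ hwne hN₁
  obtain ⟨hae2, hI2, hS2, hE2, hV2⟩ := rv_facts μ hwne hN₂
  obtain ⟨hae3, hI3, hS3, hE3, hV3⟩ := rv_facts μ hwne hZ₂
  -- independence of pairs
  have h12 : IndepFun N₁ N₂ μ := by
    simpa using hindep.indepFun (show (1 : Fin 4) ≠ 2 by decide)
  have h13 : IndepFun N₁ Z₂ μ := by
    simpa using hindep.indepFun (show (1 : Fin 4) ≠ 3 by decide)
  have h23 : IndepFun N₂ Z₂ μ := by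
    simpa using hindep.indepFun (show (2 : Fin 4) ≠ 3 by decide)
  have hP12 : Integrable (fun ω => N₁ ω * N₂ ω) μ := h12.integrable_mul hI1 hI2
  have hP13 : Integrable (fun ω => N₁ ω * Z₂ ω) μ := h13.integrable_mul hI1 hI3
  have hP23 : Integrable (fun ω => N₂ ω * Z₂ ω) μ := h23.integrable_mul hI2 hI3
  have hE12 : (∫ ω, N₁ ω * N₂ ω ∂μ) = 0 := by
    have h := h12.integral_fun_mul_eq_mul_integral hae1.aestronglyMeasurable hae2.aestronglyMeasurable
    rw [hE1, zero_mul] at h; exact h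
  have hE13 : (∫ ω, N₁ ω * Z₂ ω ∂μ) = 0 := by
    have h := h13.integral_fun_mul_eq_mul_integral hae1.aestronglyMeasurable hae3.aestronglyMeasurable
    rw [hE1, zero_mul] at h; exact h
  have hE23 : (∫ ω, N₂ ω * Z₂ ω ∂μ) = 0 := by
    have h := h23.integral_fun_mul_eq_mul_integral hae2.aestronglyMeasurable hae3.aestronglyMeasurable
    rw [hE2, zero_mul] at h; exact h
  set t : ℝ := Real.sqrt (1 + ρ ^ 2) with ht
  have ht2 : t ^ 2 = 1 + ρ ^ 2 := Real.sq_sqrt (by positivity)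
  have ht0 : 0 < t := Real.sqrt_pos.2 (by positivity)
  set a : ℝ := (1 - 1 / t) * ρ with ha
  set bb : ℝ := 1 - 1 / t with hbb
  set c : ℝ := -ρ with hc
  have hrw : ∀ ω, ((ρ ^ 2 * X₁ ω + ρ * N₁ ω + N₂ ω)
        - (-(ρ ^ 2 / t) * X₁ ω + ρ * (ρ * X₁ ω + Z₂ ω)
           + (1 / t) * (ρ ^ 2 * X₁ ω + ρ * N₁ ω + N₂ ω))) ^ 2
      = a ^ 2 * N₁ ω ^ 2 + bb ^ 2 * N₂ ω ^ 2 + c ^ 2 * Z₂ ω ^ 2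
        + (2 * a * bb) * (N₁ ω * N₂ ω) + (2 * a * c) * (N₁ ω * Z₂ ω)
        + (2 * bb * c) * (N₂ ω * Z₂ ω) := by
    intro ω; rw [ha, hbb, hc]; ring
  calc ∫ ω, ((ρ ^ 2 * X₁ ω + ρ * N₁ ω + N₂ ω)
        - (-(ρ ^ 2 / t) * X₁ ω + ρ * (ρ * X₁ ω + Z₂ ω)
           + (1 / t) * (ρ ^ 2 * X₁ ω + ρ * N₁ ω + N₂ ω))) ^ 2 ∂μ
      = ∫ ω, (a ^ 2 * N₁ ω ^ 2 + bb ^ 2 * N₂ ω ^ 2 + c ^ 2 * Z₂ ω ^ 2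
        + (2 * a * bb) * (N₁ ω * N₂ ω) + (2 * a * c) * (N₁ ω * Z₂ ω)
        + (2 * bb * c) * (N₂ ω * Z₂ ω)) ∂μ := by
        exact integral_congr_ae (Filter.Eventually.of_forall hrw)
    _ = a ^ 2 * ((1 - ρ ^ 2) * σ2) + bb ^ 2 * ((1 - ρ ^ 2) * σ2) + c ^ 2 * ((1 - ρ ^ 2) * σ2)
        + (2 * a * bb) * 0 + (2 * a * c) * 0 + (2 * bb * c) * 0 := by
        have i1 : Integrable (fun ω => a ^ 2 * N₁ ω ^ 2) μ := hS1.const_mul _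
        have i2 : Integrable (fun ω => bb ^ 2 * N₂ ω ^ 2) μ := hS2.const_mul _
        have i3 : Integrable (fun ω => c ^ 2 * Z₂ ω ^ 2) μ := hS3.const_mul _
        have i4 : Integrable (fun ω => (2 * a * bb) * (N₁ ω * N₂ ω)) μ := hP12.const_mul _
        have i5 : Integrable (fun ω => (2 * a * c) * (N₁ ω * Z₂ ω)) μ := hP13.const_mul _
        have i6 : Integrable (fun ω => (2 * bb * c) * (N₂ ω * Z₂ ω)) μ := hP23.const_mul _
        have i12 : Integrable (fun ω => a ^ 2 * N₁ ω ^ 2 + bb ^ 2 * N₂ ω ^ 2) μ := i1.add i2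
        have i123 : Integrable (fun ω => a ^ 2 * N₁ ω ^ 2 + bb ^ 2 * N₂ ω ^ 2
            + c ^ 2 * Z₂ ω ^ 2) μ := i12.add i3
        have i1234 : Integrable (fun ω => a ^ 2 * N₁ ω ^ 2 + bb ^ 2 * N₂ ω ^ 2
            + c ^ 2 * Z₂ ω ^ 2 + (2 * a * bb) * (N₁ ω * N₂ ω)) μ := i123.add i4
        have i12345 : Integrable (fun ω => a ^ 2 * N₁ ω ^ 2 + bb ^ 2 * N₂ ω ^ 2
            + c ^ 2 * Z₂ ω ^ 2 + (2 * a * bb) * (N₁ ω * N₂ ω)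
            + (2 * a * c) * (N₁ ω * Z₂ ω)) μ := i1234.add i5
        rw [integral_add i12345 i6,
          integral_add i1234 i5,
          integral_add i123 i4,
          integral_add i12 i3,
          integral_add i1 i2,
          integral_const_mul, integral_const_mul, integral_const_mul, integral_const_mul,
          integral_const_mul, integral_const_mul,
          hV1, hV2, hV3, hE12, hE13, hE23, hcoe]
    _ = 2 * σ2 * (1 - ρ ^ 4) * (1 - 1 / t) := by
        rw [ha, hbb, hc]
        have htne : t ≠ 0 := ne_of_gt ht0
        field_simp
        linear_combination (-σ2 * (1 - ρ ^ 2)) * ht2
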